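/- Every twice differentiable function h : (0, π) → ℝ satisfying h''(r) + h'(r) cot r + (2 − 9/sin²r) h(r) = 0 for all r ∈ (0, π) is of the form h(r) = (1/sin³r)( a₁ cos r + a₂ (4 sin²r + sin⁴r − 8) ) for some real constants a₁, a₂. -/

import Mathlib

open Real Set

private lemma const_of_hasDerivAt_zero {f : ℝ → ℝ} {a b : ℝ}
    (hf : ∀ r ∈ Ioo a b, HasDerivAt f 0 r) {x y : ℝ}
    (hx : x ∈ Ioo a b) (hy : y ∈ Ioo a b) : f x = f y := by
  apply (convex_Ioo a b).is_const_of_fderivWithin_eq_zero (𝕜 := ℝ)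
    (fun r hr => (hf r hr).differentiableAt.differentiableWithinAt) ?_ hx hy
  intro r hr
  rw [fderivWithin_of_isOpen isOpen_Ioo hr, (hf r hr).hasFDerivAt.fderiv]
  ext
  simp

/-- Every twice differentiable solution of h'' + h' cot r + (2 − 9/sin²r) h = 0 on (0, π)
is of the form h(r) = (a₁ cos r + a₂ (4 sin²r + sin⁴r − 8)) / sin³r. -/
theorem h_ode_general_solution (h : ℝ → ℝ)
    (hd : ∀ r ∈ Ioo (0 : ℝ) π, DifferentiableAt ℝ h r)
    (hd' : ∀ r ∈ Ioo (0 : ℝ) π, DifferentiableAt ℝ (deriv h) r)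
    (hode : ∀ r ∈ Ioo (0 : ℝ) π,
      deriv (deriv h) r + deriv h r * Real.cot r
        + (2 - 9 / Real.sin r ^ 2) * h r = 0) :
    ∃ a1 a2 : ℝ, ∀ r ∈ Ioo (0 : ℝ) π,
      h r = (a1 * Real.cos r + a2 * (4 * Real.sin r ^ 2 + Real.sin r ^ 4 - 8))
              / Real.sin r ^ 3 := by
  have hmid : π / 2 ∈ Ioo (0 : ℝ) π := by
    constructor <;> [positivity; linarith [pi_pos]]
  -- abbreviations
  set φ : ℝ → ℝ := fun x => h x * Real.sin x ^ 3 with hφdef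
  set Dφ : ℝ → ℝ := fun x =>
      deriv h x * Real.sin x ^ 3 + h x * (3 * Real.sin x ^ 2 * Real.cos x) with hDφdef
  set φ2 : ℝ → ℝ := fun x => 4 * Real.sin x ^ 2 + Real.sin x ^ 4 - 8 with hφ2def
  set Dφ2 : ℝ → ℝ := fun x =>
      8 * Real.sin x * Real.cos x + 4 * Real.sin x ^ 3 * Real.cos x with hDφ2def
  set W : ℝ → ℝ := fun x => Dφ x * φ2 x - φ x * Dφ2 x with hWdef
  set G : ℝ → ℝ := fun x => W x / Real.sin x ^ 5 with hGdef
  have hφ2ne : ∀ x : ℝ, φ2 x ≠ 0 := by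
    intro x
    have h1 : Real.sin x ^ 2 ≤ 1 := Real.sin_sq_le_one x
    simp only [hφ2def]
    nlinarith [sq_nonneg (Real.sin x)]
  -- basic derivative facts at points of the interval
  have derivs : ∀ r ∈ Ioo (0 : ℝ) π,
      HasDerivAt φ (Dφ r) r ∧
      HasDerivAt Dφ (deriv (deriv h) r * Real.sin r ^ 3
          + 6 * deriv h r * Real.sin r ^ 2 * Real.cos r
          + h r * (6 * Real.sin r * Real.cos r ^ 2 - 3 * Real.sin r ^ 3)) r ∧
      HasDerivAt φ2 (Dφ2 r) r ∧
      HasDerivAt Dφ2 (8 * Real.cos r ^ 2 - 8 * Real.sin r ^ 2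
          + 12 * Real.sin r ^ 2 * Real.cos r ^ 2 - 4 * Real.sin r ^ 4) r := by
    intro r hr
    have hsin := Real.hasDerivAt_sin r
    have hcos := Real.hasDerivAt_cos r
    have hs2 : HasDerivAt (fun x => Real.sin x ^ 2) (2 * Real.sin r * Real.cos r) r := by
      simpa using hsin.fun_pow 2
    have hs3 : HasDerivAt (fun x => Real.sin x ^ 3) (3 * Real.sin r ^ 2 * Real.cos r) r := by
      simpa using hsin.fun_pow 3
    have hs4 : HasDerivAt (fun x => Real.sin x ^ 4) (4 * Real.sin r ^ 3 * Real.cos r) r := by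
      simpa using hsin.fun_pow 4
    refine ⟨?_, ?_, ?_, ?_⟩
    · exact (hd r hr).hasDerivAt.mul hs3
    · have h3s2c : HasDerivAt (fun x => 3 * Real.sin x ^ 2 * Real.cos x)
          (6 * Real.sin r * Real.cos r ^ 2 - 3 * Real.sin r ^ 3) r := by
        have : HasDerivAt (fun x => 3 * Real.sin x ^ 2 * Real.cos x) _ r := (hs2.const_mul 3).mul hcos
        convert this using 1
        ring
      have : HasDerivAt Dφ _ r := ((hd' r hr).hasDerivAt.mul hs3).add ((hd r hr).hasDerivAt.mul h3s2c)
      convert this using 1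
      ring
    · have : HasDerivAt φ2 _ r := ((hs2.const_mul 4).add hs4).sub_const 8
      convert this using 1
      ring
    · have : HasDerivAt Dφ2 _ r := ((hsin.const_mul 8).mul hcos).add (((hs3).const_mul 4).mul hcos)
      convert this using 1
      ring
  -- multiplied form of the ODE
  have ode3 : ∀ r ∈ Ioo (0 : ℝ) π,
      deriv (deriv h) r * Real.sin r ^ 3 + deriv h r * Real.cos r * Real.sin r ^ 2
        + 2 * (h r * Real.sin r ^ 3) - 9 * (h r * Real.sin r) = 0 := by
    intro r hr
    have hs : Real.sin r ≠ 0 := ne_of_gt (Real.sin_pos_of_pos_of_lt_pi hr.1 hr.2)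
    have e := hode r hr
    rw [Real.cot_eq_cos_div_sin] at e
    calc deriv (deriv h) r * Real.sin r ^ 3 + deriv h r * Real.cos r * Real.sin r ^ 2
          + 2 * (h r * Real.sin r ^ 3) - 9 * (h r * Real.sin r)
        = (deriv (deriv h) r + deriv h r * (Real.cos r / Real.sin r)
            + (2 - 9 / Real.sin r ^ 2) * h r) * Real.sin r ^ 3 := by
          field_simp
          ring
      _ = 0 := by rw [e]; ring
  -- G has zero derivative on the interval
  have hG0 : ∀ r ∈ Ioo (0 : ℝ) π, HasDerivAt G 0 r := by
    intro r hr
    obtain ⟨hφ, hDφ, hφ2, hDφ2⟩ := derivs r hr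
    have hs : Real.sin r ≠ 0 := ne_of_gt (Real.sin_pos_of_pos_of_lt_pi hr.1 hr.2)
    have hs5 : HasDerivAt (fun x => Real.sin x ^ 5) (5 * Real.sin r ^ 4 * Real.cos r) r := by
      simpa using (Real.hasDerivAt_sin r).fun_pow 5
    have hW : HasDerivAt W
        ((deriv (deriv h) r * Real.sin r ^ 3
          + 6 * deriv h r * Real.sin r ^ 2 * Real.cos r
          + h r * (6 * Real.sin r * Real.cos r ^ 2 - 3 * Real.sin r ^ 3)) * φ2 r
          - φ r * (8 * Real.cos r ^ 2 - 8 * Real.sin r ^ 2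
          + 12 * Real.sin r ^ 2 * Real.cos r ^ 2 - 4 * Real.sin r ^ 4)) r := by
      have : HasDerivAt W _ r := (hDφ.mul hφ2).sub (hφ.mul hDφ2)
      convert this using 1
      ring
    have : HasDerivAt G _ r := hW.div hs5 (by positivity)
    convert this using 1
    symm
    rw [div_eq_zero_iff]
    left
    have e := ode3 r hr
    have pyth := Real.sin_sq_add_cos_sq r
    simp only [hφdef, hφ2def, hDφdef, hDφ2def, hWdef]
    linear_combination (Real.sin r ^ 5 * (4 * Real.sin r ^ 2 + Real.sin r ^ 4 - 8)) * e
      + (Real.sin r ^ 4 * (h r * Real.sin r ^ 3 * (32 * Real.sin r + 8 * Real.sin r ^ 3)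
          - 9 * h r * Real.sin r ^ 2 * (4 * Real.sin r ^ 2 + Real.sin r ^ 4 - 8))) * pyth
  -- the first integral: W r = C * sin^5 r
  set C : ℝ := G (π / 2) with hCdef
  have hWC : ∀ r ∈ Ioo (0 : ℝ) π, W r = C * Real.sin r ^ 5 := by
    intro r hr
    have hs : Real.sin r ≠ 0 := ne_of_gt (Real.sin_pos_of_pos_of_lt_pi hr.1 hr.2)
    have hGc := const_of_hasDerivAt_zero hG0 hr hmid
    have hC1 : C = W (π / 2) := by
      simp [hCdef, hGdef, Real.sin_pi_div_two]
    calc W r = G r * Real.sin r ^ 5 := by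
          rw [hGdef]; field_simp
      _ = C * Real.sin r ^ 5 := by rw [hGc, ← hCdef, hC1]
      _ = C * Real.sin r ^ 5 := by rw [hC1]
  -- subtract the cos-multiple
  set ψ : ℝ → ℝ := fun x => φ x - C / 3 * Real.cos x with hψdef
  have hψW : ∀ r ∈ Ioo (0 : ℝ) π,
      (Dφ r + C / 3 * Real.sin r) * φ2 r - ψ r * Dφ2 r = 0 := by
    intro r hr
    have hWr := hWC r hr
    have pyth := Real.sin_sq_add_cos_sq r
    have key : Real.sin r * φ2 r + Real.cos r * Dφ2 r = -3 * Real.sin r ^ 5 := by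
      simp only [hφ2def, hDφ2def]
      linear_combination (8 * Real.sin r + 4 * Real.sin r ^ 3) * pyth
    simp only [hψdef]
    have expand : (Dφ r + C / 3 * Real.sin r) * φ2 r - (φ r - C / 3 * Real.cos r) * Dφ2 r
        = W r + C / 3 * (Real.sin r * φ2 r + Real.cos r * Dφ2 r) := by
      simp only [hWdef]; ring
    rw [expand, key, hWr]
    ring
  -- ψ / φ2 has zero derivative
  have hH0 : ∀ r ∈ Ioo (0 : ℝ) π, HasDerivAt (fun x => ψ x / φ2 x) 0 r := by
    intro r hr
    obtain ⟨hφ, _, hφ2, _⟩ := derivs r hr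
    have hψ : HasDerivAt ψ (Dφ r + C / 3 * Real.sin r) r := by
      have : HasDerivAt ψ _ r := hφ.sub ((Real.hasDerivAt_cos r).const_mul (C / 3))
      convert this using 1
      ring
    have : HasDerivAt (fun x => ψ x / φ2 x) _ r := hψ.div hφ2 (hφ2ne r)
    convert this using 1
    rw [hψW r hr, zero_div]
  set b : ℝ := ψ (π / 2) / φ2 (π / 2) with hbdef
  refine ⟨C / 3, b, fun r hr => ?_⟩
  have hs : Real.sin r ≠ 0 := ne_of_gt (Real.sin_pos_of_pos_of_lt_pi hr.1 hr.2)
  have hHc := const_of_hasDerivAt_zero hH0 hr hmid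
  rw [← hbdef] at hHc
  have hψr : ψ r = b * φ2 r := by
    field_simp [hφ2ne r] at hHc
    linarith [hHc]
  have : h r * Real.sin r ^ 3 = C / 3 * Real.cos r + b * φ2 r := by
    have := hψr
    simp only [hψdef, hφdef] at this
    linarith [this]
  rw [eq_div_iff (by positivity : Real.sin r ^ 3 ≠ 0)]
  rw [this]
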